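/- Continuity of the Bregman projection: let Φ be Legendre, C closed convex with C ∩ int(dom Φ) ≠ ∅, and suppose D_Φ(x, ·) is coercive for some x ∈ dom Φ ∩ C. Then y ↦ proj_Φ(y, C) is continuous on int(dom Φ). -/

import Mathlib

open scoped RealInnerProductSpace

open Filter Set Topology

/-- Bregman distance generated by `Φ` with gradient map `g`. -/
noncomputable def bregman {E : Type*} [NormedAddCommGroup E] [InnerProductSpace ℝ E]
    (Φ : E → ℝ) (g : E → E) (x y : E) : ℝ :=
  Φ x - Φ y - ⟪g y, x - y⟫

/-- `Φ` (with domain `S` and gradient map `g` on `int S`) is a Legendre function. -/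
structure IsLegendre {E : Type*} [NormedAddCommGroup E] [InnerProductSpace ℝ E]
    [CompleteSpace E] (S : Set E) (Φ : E → ℝ) (g : E → E) : Prop where
  interior_nonempty : (interior S).Nonempty
  convexOn : ConvexOn ℝ S Φ
  lsc : LowerSemicontinuousOn Φ S
  grad : ∀ x ∈ interior S, HasGradientAt Φ (g x) x
  strictConvexOn : StrictConvexOn ℝ (interior S) Φ
  ess_smooth : ∀ (u : ℕ → E) (zb : E), (∀ n, u n ∈ interior S) → zb ∈ frontier S →
    Filter.Tendsto u Filter.atTop (nhds zb) →
    Filter.Tendsto (fun n => ‖g (u n)‖) Filter.atTop Filter.atTop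

lemma grad_ineq {E : Type*} [NormedAddCommGroup E] [InnerProductSpace ℝ E]
    [CompleteSpace E]
    {S : Set E} {Φ : E → ℝ} (hconv : ConvexOn ℝ S Φ) {x z v : E}
    (hx : x ∈ S) (hz : z ∈ S) (hg : HasGradientAt Φ v x) :
    ⟪v, z - x⟫ ≤ Φ z - Φ x := by
  have hline : HasDerivAt (fun t : ℝ => x + t • (z - x)) (z - x) 0 := by
    simpa using ((hasDerivAt_id (0:ℝ)).smul_const (z - x)).const_add x
  have hg' : HasFDerivAt Φ ((InnerProductSpace.toDual ℝ E) v) (x + (0:ℝ) • (z - x)) := by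
    simpa using hg.hasFDerivAt
  have hd : HasDerivAt (fun t : ℝ => Φ (x + t • (z - x))) ⟪v, z - x⟫ 0 := by
    have h := hg'.comp_hasDerivAt 0 hline
    simpa [InnerProductSpace.toDual_apply_apply, Function.comp_def] using h
  have hslope : Tendsto (slope (fun t : ℝ => Φ (x + t • (z - x))) 0) (𝓝[>] 0)
      (𝓝 ⟪v, z - x⟫) :=
    (hasDerivAt_iff_tendsto_slope.mp hd).mono_left
      (nhdsWithin_mono _ (fun t ht => ne_of_gt ht))
  refine le_of_tendsto hslope ?_
  filter_upwards [Ioo_mem_nhdsGT (by norm_num : (0:ℝ) < 1)] with t ht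
  have h1 : Φ (x + t • (z - x)) ≤ (1 - t) * Φ x + t * Φ z := by
    have h := hconv.2 hx hz (by linarith [ht.2] : (0:ℝ) ≤ 1 - t) ht.1.le (by ring)
    have hpt : (1 - t) • x + t • z = x + t • (z - x) := by
      module
    rw [hpt] at h
    simpa using h
  have ht0 : (0:ℝ) < t := ht.1
  rw [slope_def_field]
  simp only [zero_smul, smul_zero, add_zero, sub_zero]
  rw [div_le_iff₀ ht0]
  nlinarith [h1]

lemma breg_VI {E : Type*} [NormedAddCommGroup E] [InnerProductSpace ℝ E]
    [CompleteSpace E]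
    {S C : Set E} {Φ : E → ℝ} {g : E → E}
    (hCconv : Convex ℝ C) (hSconv : Convex ℝ S)
    {y p x : E} (hpC : p ∈ C) (hpS : p ∈ S) (hxC : x ∈ C) (hxS : x ∈ S)
    (hgp : HasGradientAt Φ (g p) p)
    (hmin : ∀ w ∈ C ∩ S, bregman Φ g p y ≤ bregman Φ g w y) :
    0 ≤ ⟪g p - g y, x - p⟫ := by
  have hline : HasDerivAt (fun t : ℝ => p + t • (x - p)) (x - p) 0 := by
    simpa using ((hasDerivAt_id (0:ℝ)).smul_const (x - p)).const_add p
  have hg' : HasFDerivAt Φ ((InnerProductSpace.toDual ℝ E) (g p)) (p + (0:ℝ) • (x - p)) := by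
    simpa using hgp.hasFDerivAt
  have hdΦ : HasDerivAt (fun t : ℝ => Φ (p + t • (x - p))) ⟪g p, x - p⟫ 0 := by
    have h := hg'.comp_hasDerivAt 0 hline
    simpa [InnerProductSpace.toDual_apply_apply, Function.comp_def] using h
  have hinner : ∀ t : ℝ, ⟪g y, p + t • (x - p) - y⟫ = ⟪g y, p - y⟫ + t * ⟪g y, x - p⟫ := by
    intro t
    rw [show p + t • (x - p) - y = (p - y) + t • (x - p) by abel]
    rw [inner_add_right, real_inner_smul_right]
  have hd : HasDerivAt (fun t : ℝ => bregman Φ g (p + t • (x - p)) y)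
      (⟪g p, x - p⟫ - ⟪g y, x - p⟫) 0 := by
    have h2 : HasDerivAt (fun t : ℝ => Φ y + (⟪g y, p - y⟫ + t * ⟪g y, x - p⟫))
        ⟪g y, x - p⟫ 0 := by
      have := (((hasDerivAt_id (0:ℝ)).const_mul ⟪g y, x - p⟫).const_add
        (⟪g y, p - y⟫)).const_add (Φ y)
      simpa [mul_comm] using this
    have := hdΦ.sub h2
    refine this.congr_of_eventuallyEq ?_
    filter_upwards with t
    simp [bregman, hinner t]; ring
  have hslope : Tendsto (slope (fun t : ℝ => bregman Φ g (p + t • (x - p)) y) 0) (𝓝[>] 0)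
      (𝓝 (⟪g p, x - p⟫ - ⟪g y, x - p⟫)) :=
    (hasDerivAt_iff_tendsto_slope.mp hd).mono_left
      (nhdsWithin_mono _ (fun t ht => ne_of_gt ht))
  have hge : 0 ≤ ⟪g p, x - p⟫ - ⟪g y, x - p⟫ := by
    refine ge_of_tendsto hslope ?_
    filter_upwards [Ioo_mem_nhdsGT (by norm_num : (0:ℝ) < 1)] with t ht
    have hmem : p + t • (x - p) ∈ C ∩ S := by
      have hpt : (1 - t) • p + t • x = p + t • (x - p) := by module
      constructor
      · rw [← hpt]; exact hCconv hpC hxC (by linarith [ht.2]) ht.1.le (by ring)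
      · rw [← hpt]; exact hSconv hpS hxS (by linarith [ht.2]) ht.1.le (by ring)
    have h0 : bregman Φ g p y ≤ bregman Φ g (p + t • (x - p)) y := hmin _ hmem
    rw [slope_def_field]
    have : bregman Φ g (p + (0:ℝ) • (x - p)) y = bregman Φ g p y := by norm_num
    rw [sub_zero, this]
    exact div_nonneg (by linarith) ht.1.le
  rw [inner_sub_left]
  exact hge

lemma breg_pos {E : Type*} [NormedAddCommGroup E] [InnerProductSpace ℝ E]
    [CompleteSpace E]
    {S : Set E} {Φ : E → ℝ} {g : E → E}
    (hconv : ConvexOn ℝ S Φ) (hsconv : StrictConvexOn ℝ (interior S) Φ)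
    {p w : E} (hp : p ∈ interior S) (hw : w ∈ interior S) (hwp : w ≠ p)
    (hgp : HasGradientAt Φ (g p) p) :
    0 < bregman Φ g w p := by
  set m := (1/2 : ℝ) • p + (1/2 : ℝ) • w with hm
  have hmS : m ∈ interior S :=
    hsconv.1 hp hw (by norm_num : (0:ℝ) ≤ 1/2) (by norm_num : (0:ℝ) ≤ 1/2) (by norm_num : (1:ℝ)/2 + 1/2 = 1)
  have hstrict : Φ m < (1/2 : ℝ) * Φ p + (1/2 : ℝ) * Φ w := by
    have := hsconv.2 hp hw (Ne.symm hwp) (by norm_num : (0:ℝ) < 1/2) (by norm_num : (0:ℝ) < 1/2) (by norm_num : (1:ℝ)/2 + 1/2 = 1)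
    simpa [hm, smul_eq_mul] using this
  have hineq : ⟪g p, m - p⟫ ≤ Φ m - Φ p :=
    grad_ineq hconv (interior_subset hp) (interior_subset hmS) hgp
  have hmp : m - p = (1/2 : ℝ) • (w - p) := by rw [hm]; module
  rw [hmp, real_inner_smul_right] at hineq
  have : ⟪g p, w - p⟫ ≤ Φ w - Φ p - (2 * ((1/2:ℝ) * Φ p + (1/2:ℝ) * Φ w - Φ m) - 0) + 0 := by
    nlinarith [hineq, hstrict]
  simp only [bregman]
  nlinarith [hstrict, hineq]


lemma grad_cont {E : Type*} [NormedAddCommGroup E] [InnerProductSpace ℝ E]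
    [FiniteDimensional ℝ E]
    {S : Set E} {Φ : E → ℝ} {g : E → E}
    (hconv : ConvexOn ℝ S Φ)
    (hgrad : ∀ x ∈ interior S, HasGradientAt Φ (g x) x)
    {y : E} (hy : y ∈ interior S) {η : ℝ} (hη : 0 < η) :
    ∃ δ > 0, ∀ y' ∈ interior S, ‖y' - y‖ < δ → ‖g y' - g y‖ ≤ η := by
  -- ball inside interior S
  obtain ⟨r, hr0, hrball⟩ : ∃ r > 0, Metric.closedBall y r ⊆ interior S := by
    obtain ⟨r, hr0, hrb⟩ := Metric.nhds_basis_closedBall.mem_iff.mp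
      (isOpen_interior.mem_nhds hy)
    exact ⟨r, hr0, hrb⟩
  -- continuity of Φ on the ball
  have hcont : ContinuousOn Φ (Metric.closedBall y r) := fun x hx =>
    ((hgrad x (hrball hx)).hasFDerivAt.continuousAt).continuousWithinAt
  -- little-o estimate at y
  have hlo := hasFDerivAt_iff_isLittleO_nhds_zero.mp (hgrad y hy).hasFDerivAt
  have hev := hlo.def (show (0:ℝ) < η/4 by linarith)
  obtain ⟨t₀, ht₀0, ht₀⟩ := Metric.eventually_nhds_iff.mp hev
  set t : ℝ := min (t₀/2) (r/2) with htdef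
  have ht0 : 0 < t := lt_min (by linarith) (by linarith)
  have htr : t ≤ r/2 := min_le_right _ _
  have htt0 : t < t₀ := lt_of_le_of_lt (min_le_left _ _) (by linarith)
  -- uniform continuity on the ball
  have hunif := (isCompact_closedBall y r).uniformContinuousOn_of_continuous hcont
  obtain ⟨δ₁, hδ₁0, hδ₁⟩ := Metric.uniformContinuousOn_iff.mp hunif (η*t/4)
    (by positivity)
  set δ : ℝ := min δ₁ (r/2) with hδdef
  have hδ0 : 0 < δ := lt_min hδ₁0 (by linarith)
  refine ⟨δ, hδ0, fun y' hy' hyy' => ?_⟩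
  -- key directional estimate
  have key : ∀ w : E, ‖w‖ = 1 → ⟪g y' - g y, w⟫ ≤ η := by
    intro w hw
    have hytw : y + t • w ∈ Metric.closedBall y r := by
      simp [Metric.mem_closedBall, dist_eq_norm, norm_smul, abs_of_pos ht0, hw]
      linarith
    have hymtw : y - t • w ∈ Metric.closedBall y r := by
      simp [Metric.mem_closedBall, dist_eq_norm, norm_smul, abs_of_pos ht0, hw]
      linarith
    have hy'tw : y' + t • w ∈ Metric.closedBall y r := by
      simp only [Metric.mem_closedBall, dist_eq_norm]
      have : y' + t • w - y = (y' - y) + t • w := by abel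
      rw [this]
      calc ‖(y' - y) + t • w‖ ≤ ‖y' - y‖ + ‖t • w‖ := norm_add_le _ _
        _ ≤ δ + t := by
            rw [norm_smul, hw, Real.norm_eq_abs, abs_of_pos ht0]
            simp; linarith
        _ ≤ r := by
            have : δ ≤ r/2 := min_le_right _ _
            linarith
    have hyball : y ∈ Metric.closedBall y r := Metric.mem_closedBall_self hr0.le
    have hy'ball : y' ∈ Metric.closedBall y r := by
      simp only [Metric.mem_closedBall, dist_eq_norm]
      have : δ ≤ r/2 := min_le_right _ _
      linarith
    -- gradient inequalities
    have h1 : ⟪g y', (y' + t • w) - y'⟫ ≤ Φ (y' + t • w) - Φ y' :=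
      grad_ineq hconv (interior_subset hy') (interior_subset (hrball hy'tw))
        (hgrad y' hy')
    have h2 : ⟪g y, (y - t • w) - y⟫ ≤ Φ (y - t • w) - Φ y :=
      grad_ineq hconv (interior_subset hy) (interior_subset (hrball hymtw))
        (hgrad y hy)
    rw [add_sub_cancel_left, real_inner_smul_right] at h1
    rw [sub_sub_cancel_left, inner_neg_right, real_inner_smul_right] at h2
    -- little-o bounds
    have hlo1 : ‖Φ (y + t • w) - Φ y - t * ⟪g y, w⟫‖ ≤ η/4 * ‖t • w‖ := by
      have := ht₀ (y := t • w) (by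
        simp [dist_eq_norm, norm_smul, abs_of_pos ht0, hw]; linarith)
      simpa [InnerProductSpace.toDual_apply_apply, inner_smul_right] using this
    have hlo2 : ‖Φ (y - t • w) - Φ y + t * ⟪g y, w⟫‖ ≤ η/4 * ‖-(t • w)‖ := by
      have := ht₀ (y := -(t • w)) (by
        simp [dist_eq_norm, norm_smul, abs_of_pos ht0, hw]; linarith)
      have h' : y + -(t • w) = y - t • w := by abel
      simp only [InnerProductSpace.toDual_apply_apply, h', inner_neg_right,
        inner_smul_right] at this
      convert this using 2
      · rfl
      ring
    have hnorm : ‖t • w‖ = t := by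
      rw [norm_smul, hw, Real.norm_eq_abs, abs_of_pos ht0]; ring
    rw [hnorm] at hlo1
    rw [norm_neg, hnorm] at hlo2
    have hbig1 : Φ (y + t • w) - Φ y - t * ⟪g y, w⟫ ≤ η/4 * t := (abs_le.mp hlo1).2
    have hbig2 : Φ (y - t • w) - Φ y + t * ⟪g y, w⟫ ≤ η/4 * t := (abs_le.mp hlo2).2
    -- uniform continuity bounds
    have huc1 : |Φ (y' + t • w) - Φ (y + t • w)| < η*t/4 := by
      have := hδ₁ _ hy'tw _ hytw (by
        simp only [dist_eq_norm]
        have : y' + t • w - (y + t • w) = y' - y := by abel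
        rw [this]
        exact lt_of_lt_of_le hyy' (min_le_left _ _))
      rwa [Real.dist_eq] at this
    have huc2 : |Φ y - Φ y'| < η*t/4 := by
      have := hδ₁ _ hyball _ hy'ball (by
        rw [dist_comm]
        simp only [dist_eq_norm]
        exact lt_of_lt_of_le hyy' (min_le_left _ _))
      rwa [Real.dist_eq] at this
    -- combine
    have hcomb : t * ⟪g y' - g y, w⟫ ≤ η * t := by
      rw [inner_sub_left]
      have e1 := (abs_lt.mp huc1).2
      have e2 := (abs_lt.mp huc2).2
      nlinarith [h1, h2]
    have := le_of_mul_le_mul_right (by linarith [hcomb] :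
      ⟪g y' - g y, w⟫ * t ≤ η * t) ht0
    linarith [this]
  -- conclude norm bound
  rcases eq_or_ne (g y' - g y) 0 with h0 | h0
  · rw [h0, norm_zero]; exact hη.le
  · have hw : ‖‖g y' - g y‖⁻¹ • (g y' - g y)‖ = 1 := by
      rw [norm_smul, Real.norm_eq_abs, abs_inv, abs_norm]
      exact inv_mul_cancel₀ (norm_ne_zero_iff.mpr h0)
    have := key _ hw
    rw [real_inner_smul_right, real_inner_self_eq_norm_sq] at this
    have hn : 0 < ‖g y' - g y‖ := norm_pos_iff.mpr h0
    rw [show ‖g y' - g y‖⁻¹ * ‖g y' - g y‖^2 = ‖g y' - g y‖ by rw [sq, ← mul_assoc, inv_mul_cancel₀ hn.ne', one_mul]] at this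
    exact this

theorem stmt12 {E : Type*} [NormedAddCommGroup E] [InnerProductSpace ℝ E]
    [FiniteDimensional ℝ E]
    (S : Set E) (Φ : E → ℝ) (g : E → E) (hleg : IsLegendre S Φ g)
    (C : Set E) (hCclosed : IsClosed C) (hCconv : Convex ℝ C)
    (hne : (C ∩ interior S).Nonempty)
    (hcoer : ∃ x ∈ C ∩ S, Filter.Tendsto (fun y => bregman Φ g x y)
      (Filter.comap norm Filter.atTop) Filter.atTop)
    (P : E → E)
    (hP : ∀ y ∈ interior S, P y ∈ C ∩ interior S ∧
      ∀ x ∈ C ∩ S, bregman Φ g (P y) y ≤ bregman Φ g x y) :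
    ContinuousOn P (interior S) := by
  rcases subsingleton_or_nontrivial E with hsub | hnt
  · have hPc : P = fun _ => P 0 := funext fun x => by rw [Subsingleton.elim x 0]
    rw [hPc]; exact continuousOn_const
  have hSconv : Convex ℝ S := hleg.convexOn.1
  intro y hy
  rw [Metric.continuousWithinAt_iff]
  intro ε hε
  obtain ⟨hpCS, hopt⟩ := hP y hy
  have hpC : P y ∈ C := hpCS.1
  have hpint : P y ∈ interior S := hpCS.2
  have hpS : P y ∈ S := interior_subset hpint
  -- choose radius r
  obtain ⟨r₀, hr₀0, hr₀⟩ := Metric.nhds_basis_closedBall.mem_iff.mp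
    (isOpen_interior.mem_nhds hpint)
  set r : ℝ := min r₀ (ε/2) with hrdef
  have hr0 : 0 < r := lt_min hr₀0 (by linarith)
  have hrball : Metric.closedBall (P y) r ⊆ interior S := fun x hx =>
    hr₀ (Metric.closedBall_subset_closedBall (min_le_left _ _) hx)
  -- minimum of the Bregman function on the sphere
  have hsph : (Metric.sphere (P y) r).Nonempty := NormedSpace.sphere_nonempty.mpr hr0.le
  have hcontq : ContinuousOn (fun w => bregman Φ g w (P y)) (Metric.sphere (P y) r) := by
    have hΦ : ContinuousOn Φ (Metric.sphere (P y) r) := fun x hx =>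
      ((hleg.grad x (hrball (Metric.sphere_subset_closedBall hx))).hasFDerivAt.continuousAt).continuousWithinAt
    have hin : Continuous fun w : E => ⟪g (P y), w - P y⟫ :=
      continuous_const.inner (continuous_id.sub continuous_const)
    exact (hΦ.sub continuousOn_const).sub hin.continuousOn
  obtain ⟨w₀, hw₀, hwmin⟩ := (isCompact_sphere (P y) r).exists_isMinOn hsph hcontq
  set m : ℝ := bregman Φ g w₀ (P y) with hmdef
  have hw₀ne : w₀ ≠ P y := by
    intro hcon
    rw [Metric.mem_sphere, hcon, dist_self] at hw₀
    exact hr0.ne hw₀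
  have hm0 : 0 < m :=
    breg_pos hleg.convexOn hleg.strictConvexOn hpint
      (hrball (Metric.sphere_subset_closedBall hw₀)) hw₀ne (hleg.grad _ hpint)
  -- gradient continuity
  obtain ⟨δ, hδ0, hδ⟩ := grad_cont hleg.convexOn hleg.grad hy
    (show (0:ℝ) < m/(2*r) by positivity)
  refine ⟨δ, hδ0, fun y' hy' hdist => ?_⟩
  obtain ⟨hzCS, hopt'⟩ := hP y' hy'
  have hzC : P y' ∈ C := hzCS.1
  have hzint : P y' ∈ interior S := hzCS.2
  have hzS : P y' ∈ S := interior_subset hzint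
  have hgnorm : ‖g y' - g y‖ ≤ m/(2*r) := hδ y' hy' (by rwa [← dist_eq_norm])
  -- key inequality: bregman (P y') (P y) is small
  have alg : bregman Φ g (P y') (P y) + bregman Φ g (P y) (P y') =
      ⟪g (P y') - g (P y), P y' - P y⟫ := by
    simp only [bregman, inner_sub_left]
    rw [show P y - P y' = -(P y' - P y) by abel, inner_neg_right]
    ring
  have hnn : 0 ≤ bregman Φ g (P y) (P y') := by
    have := grad_ineq hleg.convexOn hzS hpS (hleg.grad _ hzint)
    simp only [bregman]; linarith
  have h1 : 0 ≤ ⟪g (P y') - g y', P y - P y'⟫ :=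
    breg_VI hCconv hSconv hzC hzS hpC hpS (hleg.grad _ hzint) hopt'
  have h2 : 0 ≤ ⟪g (P y) - g y, P y' - P y⟫ :=
    breg_VI hCconv hSconv hpC hpS hzC hzS (hleg.grad _ hpint) hopt
  have h1' : ⟪g (P y') - g y', P y' - P y⟫ ≤ 0 := by
    rw [show P y' - P y = -(P y - P y') by abel, inner_neg_right]; linarith
  have hVIsum : ⟪g (P y') - g (P y), P y' - P y⟫ ≤ ⟪g y' - g y, P y' - P y⟫ := by
    have e : ⟪g (P y') - g (P y), P y' - P y⟫ - ⟪g y' - g y, P y' - P y⟫ =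
        ⟪g (P y') - g y', P y' - P y⟫ - ⟪g (P y) - g y, P y' - P y⟫ := by
      rw [← inner_sub_left, ← inner_sub_left]
      congr 1
      abel
    linarith
  have hqz : bregman Φ g (P y') (P y) ≤ m/(2*r) * ‖P y' - P y‖ := by
    have hcs : ⟪g y' - g y, P y' - P y⟫ ≤ ‖g y' - g y‖ * ‖P y' - P y‖ :=
      real_inner_le_norm _ _
    have hns : ‖g y' - g y‖ * ‖P y' - P y‖ ≤ m/(2*r) * ‖P y' - P y‖ :=
      mul_le_mul_of_nonneg_right hgnorm (norm_nonneg _)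
    linarith
  -- conclude ‖P y' - P y‖ < r
  have hfin : ‖P y' - P y‖ < r := by
    by_contra hR
    push_neg at hR
    set R : ℝ := ‖P y' - P y‖ with hRdef
    have hR0 : 0 < R := lt_of_lt_of_le hr0 hR
    set s : ℝ := r / R with hsdef
    have hs0 : 0 < s := by positivity
    have hs1 : s ≤ 1 := by rw [hsdef, div_le_one hR0]; exact hR
    set w : E := P y + s • (P y' - P y) with hwdef
    have hwsph : w ∈ Metric.sphere (P y) r := by
      rw [Metric.mem_sphere, dist_eq_norm]
      rw [hwdef, show P y + s • (P y' - P y) - P y = s • (P y' - P y) by abel]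
      rw [norm_smul, Real.norm_eq_abs, abs_of_pos hs0, hsdef]
      field_simp
      exact hRdef.symm
    -- convexity of the Bregman function in its first slot
    have haff : ConvexOn ℝ S (fun w => -Φ (P y) - ⟪g (P y), w - P y⟫) := by
      refine ⟨hSconv, fun a ha b hb s' t' hs' ht' hst' => le_of_eq ?_⟩
      simp only [inner_sub_right, inner_add_right, real_inner_smul_right,
        smul_eq_mul]
      linear_combination (Φ (P y) - inner ℝ (g (P y)) (P y)) * hst'
    have hqconv : ConvexOn ℝ S (fun w => bregman Φ g w (P y)) := by
      have := hleg.convexOn.add haff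
      convert this using 1
      · rfl
      funext u
      simp only [bregman, Pi.add_apply]
      ring
    have hcx := hqconv.2 hpS hzS (by linarith : (0:ℝ) ≤ 1 - s) hs0.le (by ring)
    have hwc : (1 - s) • P y + s • P y' = w := by rw [hwdef]; module
    rw [hwc] at hcx
    have hq0 : bregman Φ g (P y) (P y) = 0 := by simp [bregman]
    have hmw : m ≤ bregman Φ g w (P y) := hwmin hwsph
    have hqz' : bregman Φ g (P y') (P y) ≤ m/(2*r) * R := hqz
    have : m ≤ s * (m/(2*r) * R) := by
      have : bregman Φ g w (P y) ≤ s * bregman Φ g (P y') (P y) := by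
        simp only [smul_eq_mul, hq0] at hcx
        linarith [hcx]
      nlinarith [hmw, this, hqz', hs0]
    rw [hsdef] at this
    have heq : r / R * (m/(2*r) * R) = m/2 := by field_simp
    rw [heq] at this
    linarith
  rw [dist_eq_norm]
  calc ‖P y' - P y‖ < r := hfin
    _ ≤ ε/2 := min_le_right _ _
    _ < ε := by linarith
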